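/- Let N = 4 and let R be the additive subgroup of (Fin 4 → ZMod 4) generated by the two rows (2,2,0,0) and (0,1,1,2). Then S(R) = 1, i.e. S(R) = s − 3 for s = 4. (This is the verification that the genus-3 family of Table 1, with Galois group Z/2 × Z/4, N = 4 and monodromy data {(2,0),(2,1),(0,1),(0,2)}, generates a Shimura subvariety: dim S(G) = s − 3.) -/

import Mathlib

open Finset

/-- `paperD N α = −1 + (1/N)·∑_j val(−α_j)` : the dimension `d(α)` of the eigenspace of
holomorphic differentials with local monodromy data `α` (Proposition 2.2.3). -/
noncomputable def paperD {s : ℕ} (N : ℕ) (α : Fin s → ZMod N) : ℚ :=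
  -1 + (1 / (N : ℚ)) * ∑ j, (((-α j).val : ℚ))

/-- `paperS R` : the dimension of the PEL Shimura subvariety `S(G)` attached to a family of
abelian covers with character data the finite additive subgroup `R` (Lemma 2.2.1):
`S(R) = (1/2)·∑_{α ∈ R, 2α ≠ 0} d(α)d(−α) + (1/2)·∑_{α ∈ R, α ≠ 0, 2α = 0} d(α)(d(α)+1)`. -/
noncomputable def paperS {s N : ℕ} [NeZero N] (R : AddSubgroup (Fin s → ZMod N)) : ℚ :=
  (1 / 2) * ∑ α ∈ ((R : Set (Fin s → ZMod N)).toFinite.toFinset.filter fun α => 2 • α ≠ 0),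
      paperD N α * paperD N (-α)
  + (1 / 2) * ∑ α ∈ ((R : Set (Fin s → ZMod N)).toFinite.toFinset.filter
        fun α => α ≠ 0 ∧ 2 • α = 0),
      paperD N α * (paperD N α + 1)

def Fgrp : Finset (Fin 4 → ZMod 4) :=
  {![0,0,0,0], ![2,2,0,0], ![0,1,1,2], ![2,3,1,2], ![0,2,2,0], ![2,0,2,0], ![0,3,3,2], ![2,1,3,2]}

set_option maxRecDepth 10000 in
def Hgrp : AddSubgroup (Fin 4 → ZMod 4) where
  carrier := ↑Fgrp
  zero_mem' := Finset.mem_coe.mpr (by decide)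
  add_mem' := by
    intro a b ha hb
    have H : ∀ a ∈ Fgrp, ∀ b ∈ Fgrp, a + b ∈ Fgrp := by decide
    exact Finset.mem_coe.mpr (H a (Finset.mem_coe.mp ha) b (Finset.mem_coe.mp hb))
  neg_mem' := by
    intro a ha
    have H : ∀ a ∈ Fgrp, -a ∈ Fgrp := by decide
    exact Finset.mem_coe.mpr (H a (Finset.mem_coe.mp ha))

lemma closure_eq : AddSubgroup.closure {(![2, 2, 0, 0] : Fin 4 → ZMod 4), ![0, 1, 1, 2]} = Hgrp := by
  apply le_antisymm
  · rw [AddSubgroup.closure_le]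
    intro x hx
    rcases hx with h | h <;> subst h <;> (change _ ∈ (Fgrp : Set (Fin 4 → ZMod 4)); rw [Finset.mem_coe]; decide)
  · intro x hx
    have ha : (![2, 2, 0, 0] : Fin 4 → ZMod 4) ∈ AddSubgroup.closure {(![2, 2, 0, 0] : Fin 4 → ZMod 4), ![0, 1, 1, 2]} :=
      AddSubgroup.subset_closure (by simp)
    have hb : (![0, 1, 1, 2] : Fin 4 → ZMod 4) ∈ AddSubgroup.closure {(![2, 2, 0, 0] : Fin 4 → ZMod 4), ![0, 1, 1, 2]} :=
      AddSubgroup.subset_closure (by simp)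
    have hx' : x ∈ Fgrp := Finset.mem_coe.mp hx
    fin_cases hx'
    · have := AddSubgroup.zero_mem (AddSubgroup.closure {(![2, 2, 0, 0] : Fin 4 → ZMod 4), ![0, 1, 1, 2]})
      convert this using 2; decide
    · exact ha
    · exact hb
    · have := AddSubgroup.add_mem _ ha hb
      convert this using 2; decide
    · have := AddSubgroup.add_mem _ hb hb
      convert this using 2; decide
    · have := AddSubgroup.add_mem _ ha (AddSubgroup.add_mem _ hb hb)
      convert this using 2; decide
    · have := AddSubgroup.add_mem _ hb (AddSubgroup.add_mem _ hb hb)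
      convert this using 2; decide
    · have := AddSubgroup.add_mem _ ha (AddSubgroup.add_mem _ hb (AddSubgroup.add_mem _ hb hb))
      convert this using 2; decide

lemma paperD_vec (a b c d : ZMod 4) :
    paperD 4 ![a,b,c,d] = -1 + (1/4) * (((-a).val : ℚ) + ((-b).val : ℚ) + ((-c).val : ℚ) + ((-d).val : ℚ)) := by
  simp [paperD, Fin.sum_univ_four]
  try ring


/-- Table 1, first genus-3 family: `G = ℤ/2 × ℤ/4`, `N = 4`, monodromy data
`{(2,0),(2,1),(0,1),(0,2)}` (rows `(2,2,0,0)` and `(0,1,1,2)`): `S(R) = 1 = s − 3`. -/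
theorem table1_genus3_first :
    paperS (AddSubgroup.closure {(![2, 2, 0, 0] : Fin 4 → ZMod 4), ![0, 1, 1, 2]}) = 1 := by
  rw [closure_eq]
  have hset : ((Hgrp : Set (Fin 4 → ZMod 4)).toFinite.toFinset) = Fgrp := by
    ext x; simp only [Set.Finite.mem_toFinset]; rfl
  rw [paperS, hset]
  have h1 : Fgrp.filter (fun α => 2 • α ≠ 0) =
      {![0,1,1,2], ![2,3,1,2], ![0,3,3,2], ![2,1,3,2]} := by decide
  have h2 : Fgrp.filter (fun α => α ≠ 0 ∧ 2 • α = 0) =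
      {![2,2,0,0], ![0,2,2,0], ![2,0,2,0]} := by decide
  rw [h1, h2]
  rw [Finset.sum_insert (by decide), Finset.sum_insert (by decide), Finset.sum_insert (by decide),
    Finset.sum_singleton, Finset.sum_insert (by decide), Finset.sum_insert (by decide),
    Finset.sum_singleton]
  have v0 : ((-(0 : ZMod 4)).val : ℚ) = 0 := by rw [show (-(0 : ZMod 4)).val = 0 from by decide]; norm_num
  have v1 : ((-(1 : ZMod 4)).val : ℚ) = 3 := by rw [show (-(1 : ZMod 4)).val = 3 from by decide]; norm_num
  have v2 : ((-(2 : ZMod 4)).val : ℚ) = 2 := by rw [show (-(2 : ZMod 4)).val = 2 from by decide]; norm_num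
  have v3 : ((-(3 : ZMod 4)).val : ℚ) = 1 := by rw [show (-(3 : ZMod 4)).val = 1 from by decide]; norm_num
  have w0 : (((0 : ZMod 4)).val : ℚ) = 0 := by rw [show ((0 : ZMod 4)).val = 0 from by decide]; norm_num
  have w1 : (((1 : ZMod 4)).val : ℚ) = 1 := by rw [show ((1 : ZMod 4)).val = 1 from by decide]; norm_num
  have w2 : (((2 : ZMod 4)).val : ℚ) = 2 := by rw [show ((2 : ZMod 4)).val = 2 from by decide]; norm_num
  have w3 : (((3 : ZMod 4)).val : ℚ) = 3 := by rw [show ((3 : ZMod 4)).val = 3 from by decide]; norm_num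
  simp only [Matrix.neg_cons, Matrix.neg_empty, neg_neg, paperD_vec, v0, v1, v2, v3, w0, w1, w2, w3]
  norm_num
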